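/- Let H, H₁ be complex Hilbert spaces, p > 0, C₀ ≥ 0, and let B : H → H₁ be a compact operator. Suppose that for each M ∈ ℕ one can write B = B_M + B′_M with compact operators B_M, B′_M such that s_j(B_M) j^{1/p} → C_M as j → ∞, s_j(B′_M) j^{1/p} ≤ c_M for all j ∈ ℕ, and C_M → C₀, c_M → 0 as M → ∞. Then s_j(B) j^{1/p} → C₀ as j → ∞. -/
import Mathlib


open Filter
open scoped Topology

noncomputable section

/-- The `j`-th singular value (approximation number) of a bounded operator between
Hilbert spaces: `s_j(B) = inf{‖B − F‖ : F of rank < j}`. -/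
def sNum {H H₁ : Type*} [NormedAddCommGroup H] [InnerProductSpace ℂ H]
    [NormedAddCommGroup H₁] [InnerProductSpace ℂ H₁] (B : H →L[ℂ] H₁) (j : ℕ) : ℝ :=
  sInf {r : ℝ | ∃ F : H →L[ℂ] H₁,
    Module.rank ℂ (LinearMap.range (F : H →ₗ[ℂ] H₁)) < (j : Cardinal) ∧ ‖B - F‖ = r}


section SNumAux

variable {H H₁ : Type*} [NormedAddCommGroup H] [InnerProductSpace ℂ H]
    [NormedAddCommGroup H₁] [InnerProductSpace ℂ H₁]

lemma sNum_set_bddBelow (B : H →L[ℂ] H₁) (j : ℕ) :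
    BddBelow {r : ℝ | ∃ F : H →L[ℂ] H₁,
      Module.rank ℂ (LinearMap.range (F : H →ₗ[ℂ] H₁)) < (j : Cardinal) ∧ ‖B - F‖ = r} :=
  ⟨0, by rintro r ⟨F, -, rfl⟩; exact norm_nonneg _⟩

lemma sNum_nonneg (B : H →L[ℂ] H₁) (j : ℕ) : 0 ≤ sNum B j :=
  Real.sInf_nonneg (by rintro r ⟨F, -, rfl⟩; exact norm_nonneg _)

lemma rank_zero_lt {j : ℕ} (hj : 1 ≤ j) :
    Module.rank ℂ (LinearMap.range (((0 : H →L[ℂ] H₁) : H →ₗ[ℂ] H₁))) < (j : Cardinal) := by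
  rw [ContinuousLinearMap.coe_zero, LinearMap.range_zero, rank_bot]
  exact_mod_cast Nat.pos_of_ne_zero (by omega)

lemma sNum_set_nonempty (B : H →L[ℂ] H₁) {j : ℕ} (hj : 1 ≤ j) :
    Set.Nonempty {r : ℝ | ∃ F : H →L[ℂ] H₁,
      Module.rank ℂ (LinearMap.range (F : H →ₗ[ℂ] H₁)) < (j : Cardinal) ∧ ‖B - F‖ = r} :=
  ⟨‖B - 0‖, 0, rank_zero_lt hj, rfl⟩

lemma sNum_le (B F : H →L[ℂ] H₁) {j : ℕ}
    (h : Module.rank ℂ (LinearMap.range (F : H →ₗ[ℂ] H₁)) < (j : Cardinal)) :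
    sNum B j ≤ ‖B - F‖ :=
  csInf_le (sNum_set_bddBelow B j) ⟨F, h, rfl⟩

lemma sNum_neg (B : H →L[ℂ] H₁) (j : ℕ) : sNum (-B) j = sNum B j := by
  unfold sNum
  congr 1
  ext r
  constructor
  · rintro ⟨F, hF, rfl⟩
    refine ⟨-F, ?_, ?_⟩
    · rwa [ContinuousLinearMap.coe_neg, LinearMap.range_neg]
    · rw [show B - -F = -(-B - F) by abel, norm_neg]
  · rintro ⟨F, hF, rfl⟩
    refine ⟨-F, ?_, ?_⟩
    · rwa [ContinuousLinearMap.coe_neg, LinearMap.range_neg]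
    · rw [show -B - -F = -(B - F) by abel, norm_neg]

lemma card_aux {j k : ℕ} (hj : 1 ≤ j) (hk : 1 ≤ k) {a b : Cardinal}
    (ha : a < (j : Cardinal)) (hb : b < (k : Cardinal)) :
    a + b < ((j + k - 1 : ℕ) : Cardinal) := by
  obtain ⟨a', rfl⟩ := Cardinal.lt_aleph0.mp (ha.trans (Cardinal.nat_lt_aleph0 j))
  obtain ⟨b', rfl⟩ := Cardinal.lt_aleph0.mp (hb.trans (Cardinal.nat_lt_aleph0 k))
  rw [← Nat.cast_add, Nat.cast_lt]
  have ha' := Nat.cast_lt.mp ha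
  have hb' := Nat.cast_lt.mp hb
  omega

lemma sNum_add_le (A B : H →L[ℂ] H₁) {j k : ℕ} (hj : 1 ≤ j) (hk : 1 ≤ k) :
    sNum (A + B) (j + k - 1) ≤ sNum A j + sNum B k := by
  refine le_of_forall_pos_le_add fun ε hε => ?_
  obtain ⟨r, ⟨F, hF, rfl⟩, hrlt⟩ :=
    Real.lt_sInf_add_pos (sNum_set_nonempty A hj) (half_pos hε)
  obtain ⟨s, ⟨G, hG, rfl⟩, hslt⟩ :=
    Real.lt_sInf_add_pos (sNum_set_nonempty B hk) (half_pos hε)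
  have hrank : Module.rank ℂ (LinearMap.range ((F + G : H →L[ℂ] H₁) : H →ₗ[ℂ] H₁))
      < ((j + k - 1 : ℕ) : Cardinal) := by
    refine lt_of_le_of_lt ?_ (card_aux hj hk hF hG)
    refine le_trans (Submodule.rank_mono ?_) (Submodule.rank_add_le_rank_add_rank _ _)
    rintro x ⟨y, rfl⟩
    exact Submodule.add_mem_sup (LinearMap.mem_range_self _ y) (LinearMap.mem_range_self _ y)
  calc sNum (A + B) (j + k - 1) ≤ ‖(A + B) - (F + G)‖ := sNum_le _ _ hrank
    _ ≤ ‖A - F‖ + ‖B - G‖ := by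
        rw [show (A + B) - (F + G) = (A - F) + (B - G) by abel]
        exact norm_add_le _ _
    _ ≤ sNum A j + sNum B k + ε := by
        unfold sNum
        linarith

lemma sNum_antitone (B : H →L[ℂ] H₁) {j k : ℕ} (hj : 1 ≤ j) (hjk : j ≤ k) :
    sNum B k ≤ sNum B j := by
  refine csInf_le_csInf (sNum_set_bddBelow B k) (sNum_set_nonempty B hj) ?_
  rintro r ⟨F, hF, rfl⟩
  exact ⟨F, hF.trans_le (by exact_mod_cast hjk), rfl⟩

end SNumAux

set_option maxHeartbeats 1600000 in
/-- refined perturbation lemma, [G84] Lemma 4.2 2°: if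
`B = B_M + B'_M` for each `M`, with `s_j(B_M) j^{1/p} → C_M`,
`s_j(B'_M) j^{1/p} ≤ c_M` for all `j ≥ 1`, and `C_M → C₀`, `c_M → 0`,
then `s_j(B) j^{1/p} → C₀`. -/
theorem statement2 {H H₁ : Type*}
    [NormedAddCommGroup H] [InnerProductSpace ℂ H] [CompleteSpace H]
    [NormedAddCommGroup H₁] [InnerProductSpace ℂ H₁] [CompleteSpace H₁]
    (p C₀ : ℝ) (hp : 0 < p) (hC₀ : 0 ≤ C₀)
    (B : H →L[ℂ] H₁) (hB : IsCompactOperator (B : H → H₁))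
    (BM B'M : ℕ → (H →L[ℂ] H₁)) (CM cM : ℕ → ℝ)
    (hBM : ∀ M, IsCompactOperator ((BM M : H →L[ℂ] H₁) : H → H₁))
    (hB'M : ∀ M, IsCompactOperator ((B'M M : H →L[ℂ] H₁) : H → H₁))
    (hsplit : ∀ M, B = BM M + B'M M)
    (hasym : ∀ M, Tendsto (fun j : ℕ => sNum (BM M) j * (j : ℝ) ^ (1 / p)) atTop (𝓝 (CM M)))
    (hbound : ∀ M, ∀ j : ℕ, 1 ≤ j → sNum (B'M M) j * (j : ℝ) ^ (1 / p) ≤ cM M)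
    (hCM : Tendsto CM atTop (𝓝 C₀)) (hcM : Tendsto cM atTop (𝓝 0)) :
    Tendsto (fun j : ℕ => sNum B j * (j : ℝ) ^ (1 / p)) atTop (𝓝 C₀) := by
  set a : ℕ → ℝ := fun n => sNum B n * (n : ℝ) ^ (1 / p) with ha_def
  have hp' : (0 : ℝ) < 1 / p := by positivity
  have hp'' : (0 : ℝ) ≤ 1 / p := hp'.le
  have ha0 : ∀ n, 0 ≤ a n := fun n =>
    mul_nonneg (sNum_nonneg B n) (Real.rpow_nonneg (Nat.cast_nonneg n) _)
  have hcM0 : ∀ M, 0 ≤ cM M := by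
    intro M
    refine le_trans ?_ (hbound M 1 le_rfl)
    exact mul_nonneg (sNum_nonneg _ _) (Real.rpow_nonneg (by norm_num) _)
  -- the main upper estimate
  have upper : ∀ M : ℕ, ∀ δ : ℝ, 0 < δ → δ ≤ 1 / 2 → ∀ ε : ℝ, 0 < ε →
      ∀ᶠ n in atTop, a n ≤ (CM M + ε) * ((1 - δ)⁻¹) ^ (1 / p) + cM M * (2 / δ) ^ (1 / p) := by
    intro M δ hδ hδ2 ε hε
    have h1δ : (0 : ℝ) < 1 - δ := by linarith
    set jf : ℕ → ℕ := fun n => n - ⌊δ * (n : ℝ)⌋₊ + 1 with hjf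
    -- j(n) + 1 → ∞
    have hjto : Tendsto jf atTop atTop := by
      rw [tendsto_atTop]
      intro b
      filter_upwards [eventually_ge_atTop (2 * b)] with n hn
      have h1 : (⌊δ * n⌋₊ : ℝ) ≤ δ * n := Nat.floor_le (by positivity)
      have h2 : δ * n ≤ (n : ℝ) / 2 := by
        have : (0 : ℝ) ≤ n := Nat.cast_nonneg n
        nlinarith
      have h3 : (⌊δ * n⌋₊ : ℝ) ≤ (n : ℝ) / 2 := le_trans h1 h2
      have h4 : (2 * b : ℝ) ≤ (n : ℝ) := by exact_mod_cast hn
      have h5 : (⌊δ * n⌋₊ : ℝ) + (b : ℝ) ≤ (n : ℝ) := by linarith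
      have h6 : ⌊δ * n⌋₊ + b ≤ n := by exact_mod_cast h5
      show b ≤ n - ⌊δ * (n : ℝ)⌋₊ + 1
      omega
    have hbconv : Tendsto
        (fun n : ℕ => sNum (BM M) (jf n) * ((jf n : ℕ) : ℝ) ^ (1 / p)) atTop (𝓝 (CM M)) :=
      (hasym M).comp hjto
    have hbev : ∀ᶠ n in atTop, sNum (BM M) (jf n) * ((jf n : ℕ) : ℝ) ^ (1 / p) ≤ CM M + ε :=
      hbconv.eventually (eventually_le_nhds (lt_add_of_pos_right (CM M) hε))
    filter_upwards [hbev, eventually_ge_atTop (⌈2 / δ⌉₊ + 1)] with n hbn hn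
    set m := ⌊δ * (n : ℝ)⌋₊ with hm_def
    set j := n - m with hj_def
    have hjfn : jf n = j + 1 := rfl
    rw [hjfn] at hbn
    have hnR : (2 : ℝ) / δ ≤ (n : ℝ) := by
      calc (2 : ℝ) / δ ≤ (⌈2 / δ⌉₊ : ℝ) := Nat.le_ceil _
        _ ≤ (n : ℝ) := by exact_mod_cast Nat.le_of_succ_le hn
    have hδn : (2 : ℝ) ≤ δ * n := by
      rw [div_le_iff₀ hδ] at hnR
      linarith
    have hn0 : (0 : ℝ) < (n : ℝ) := by nlinarith
    have hm_le : (m : ℝ) ≤ δ * n := Nat.floor_le (by positivity)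
    have hm_ge : δ * n / 2 ≤ (m : ℝ) := by
      have := Nat.sub_one_lt_floor (δ * n)
      linarith
    have hm1 : 1 ≤ m := by
      have : (1 : ℝ) ≤ (m : ℝ) := by linarith
      exact_mod_cast this
    have hmn : m ≤ n := by
      have : (m : ℝ) ≤ (n : ℝ) := by nlinarith
      exact_mod_cast this
    have hjR : (j : ℝ) = (n : ℝ) - (m : ℝ) := by
      rw [hj_def]; exact Nat.cast_sub hmn
    have hidx : (j + 1) + m - 1 = n := by omega
    have key : sNum B n ≤ sNum (BM M) (j + 1) + sNum (B'M M) m := by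
      have h := sNum_add_le (BM M) (B'M M) (j := j + 1) (k := m) (by omega) hm1
      rw [hidx] at h
      rw [hsplit M]
      exact h
    have hnpow : (0 : ℝ) ≤ (n : ℝ) ^ (1 / p) := Real.rpow_nonneg hn0.le _
    have step1 : a n ≤ sNum (BM M) (j + 1) * (n : ℝ) ^ (1 / p)
        + sNum (B'M M) m * (n : ℝ) ^ (1 / p) := by
      rw [ha_def]
      calc sNum B n * (n : ℝ) ^ (1 / p)
          ≤ (sNum (BM M) (j + 1) + sNum (B'M M) m) * (n : ℝ) ^ (1 / p) :=
            mul_le_mul_of_nonneg_right key hnpow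
        _ = _ := add_mul _ _ _
    -- first term
    have hfac1 : (n : ℝ) ^ (1 / p) ≤ ((j + 1 : ℕ) : ℝ) ^ (1 / p) * ((1 - δ)⁻¹) ^ (1 / p) := by
      have hle : (n : ℝ) ≤ ((j + 1 : ℕ) : ℝ) * (1 - δ)⁻¹ := by
        have hjge : (n : ℝ) * (1 - δ) ≤ ((j + 1 : ℕ) : ℝ) := by
          push_cast
          rw [hjR]
          nlinarith
        calc (n : ℝ) = (n : ℝ) * (1 - δ) * (1 - δ)⁻¹ := by field_simp
          _ ≤ ((j + 1 : ℕ) : ℝ) * (1 - δ)⁻¹ :=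
            mul_le_mul_of_nonneg_right hjge (inv_nonneg.mpr h1δ.le)
      calc (n : ℝ) ^ (1 / p) ≤ (((j + 1 : ℕ) : ℝ) * (1 - δ)⁻¹) ^ (1 / p) :=
            Real.rpow_le_rpow hn0.le hle hp''
        _ = _ := Real.mul_rpow (Nat.cast_nonneg _) (inv_nonneg.mpr h1δ.le)
    have term1 : sNum (BM M) (j + 1) * (n : ℝ) ^ (1 / p)
        ≤ (CM M + ε) * ((1 - δ)⁻¹) ^ (1 / p) := by
      calc sNum (BM M) (j + 1) * (n : ℝ) ^ (1 / p)
          ≤ sNum (BM M) (j + 1) * (((j + 1 : ℕ) : ℝ) ^ (1 / p) * ((1 - δ)⁻¹) ^ (1 / p)) :=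
            mul_le_mul_of_nonneg_left hfac1 (sNum_nonneg _ _)
        _ = (sNum (BM M) (j + 1) * ((j + 1 : ℕ) : ℝ) ^ (1 / p)) * ((1 - δ)⁻¹) ^ (1 / p) := by
            ring
        _ ≤ (CM M + ε) * ((1 - δ)⁻¹) ^ (1 / p) :=
            mul_le_mul_of_nonneg_right hbn (Real.rpow_nonneg (inv_nonneg.mpr h1δ.le) _)
    -- second term
    have hfac2 : (n : ℝ) ^ (1 / p) ≤ (m : ℝ) ^ (1 / p) * (2 / δ) ^ (1 / p) := by
      have hle : (n : ℝ) ≤ (m : ℝ) * (2 / δ) := by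
        calc (n : ℝ) = (δ * n / 2) * (2 / δ) := by field_simp
          _ ≤ (m : ℝ) * (2 / δ) := mul_le_mul_of_nonneg_right hm_ge (by positivity)
      calc (n : ℝ) ^ (1 / p) ≤ ((m : ℝ) * (2 / δ)) ^ (1 / p) :=
            Real.rpow_le_rpow hn0.le hle hp''
        _ = _ := Real.mul_rpow (Nat.cast_nonneg _) (by positivity)
    have term2 : sNum (B'M M) m * (n : ℝ) ^ (1 / p) ≤ cM M * (2 / δ) ^ (1 / p) := by
      calc sNum (B'M M) m * (n : ℝ) ^ (1 / p)
          ≤ sNum (B'M M) m * ((m : ℝ) ^ (1 / p) * (2 / δ) ^ (1 / p)) :=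
            mul_le_mul_of_nonneg_left hfac2 (sNum_nonneg _ _)
        _ = (sNum (B'M M) m * (m : ℝ) ^ (1 / p)) * (2 / δ) ^ (1 / p) := by ring
        _ ≤ cM M * (2 / δ) ^ (1 / p) :=
            mul_le_mul_of_nonneg_right (hbound M m hm1) (by positivity)
    linarith
  -- the main lower estimate
  have lower : ∀ M : ℕ, ∀ δ : ℝ, 0 < δ → δ ≤ 1 / 2 → ∀ ε : ℝ, 0 < ε →
      ∀ᶠ k in atTop, (CM M - ε) * (((1 + δ) ^ (1 / p))⁻¹) - cM M * (2 / δ) ^ (1 / p) ≤ a k := by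
    intro M δ hδ hδ2 ε hε
    have h1δ : (0 : ℝ) < 1 + δ := by linarith
    set nf : ℕ → ℕ := fun k => k + ⌊δ * (k : ℝ)⌋₊ - 1 with hnf
    have hnto : Tendsto nf atTop atTop := by
      rw [tendsto_atTop]
      intro b
      filter_upwards [eventually_ge_atTop (b + 1)] with k hk
      show b ≤ k + ⌊δ * (k : ℝ)⌋₊ - 1
      omega
    have hbconv : Tendsto
        (fun k : ℕ => sNum (BM M) (nf k) * ((nf k : ℕ) : ℝ) ^ (1 / p)) atTop (𝓝 (CM M)) :=
      (hasym M).comp hnto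
    have hbev : ∀ᶠ k in atTop, CM M - ε ≤ sNum (BM M) (nf k) * ((nf k : ℕ) : ℝ) ^ (1 / p) :=
      hbconv.eventually (eventually_ge_nhds (sub_lt_self (CM M) hε))
    filter_upwards [hbev, eventually_ge_atTop (⌈2 / δ⌉₊ + 1)] with k hbk hk
    set m := ⌊δ * (k : ℝ)⌋₊ with hm_def
    set n := k + m - 1 with hn_def
    have hnfk : nf k = n := rfl
    rw [hnfk] at hbk
    have hkR : (2 : ℝ) / δ ≤ (k : ℝ) := by
      calc (2 : ℝ) / δ ≤ (⌈2 / δ⌉₊ : ℝ) := Nat.le_ceil _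
        _ ≤ (k : ℝ) := by exact_mod_cast Nat.le_of_succ_le hk
    have hδk : (2 : ℝ) ≤ δ * k := by
      rw [div_le_iff₀ hδ] at hkR
      linarith
    have hk0 : (0 : ℝ) < (k : ℝ) := by nlinarith
    have hm_le : (m : ℝ) ≤ δ * k := Nat.floor_le (by positivity)
    have hm_ge : δ * k / 2 ≤ (m : ℝ) := by
      have := Nat.sub_one_lt_floor (δ * k)
      linarith
    have hm1 : 1 ≤ m := by
      have : (1 : ℝ) ≤ (m : ℝ) := by linarith
      exact_mod_cast this
    have hk1 : 1 ≤ k := by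
      have : (1 : ℝ) ≤ (k : ℝ) := by nlinarith
      exact_mod_cast this
    have hnR : (n : ℝ) = (k : ℝ) + (m : ℝ) - 1 := by
      rw [hn_def]
      push_cast [Nat.cast_sub (by omega : 1 ≤ k + m)]
      ring
    have key : sNum (BM M) n ≤ sNum B k + sNum (B'M M) m := by
      have h := sNum_add_le B (-(B'M M)) (j := k) (k := m) hk1 hm1
      rw [sNum_neg] at h
      have hBM : BM M = B + -(B'M M) := by
        rw [hsplit M]; abel
      rw [hn_def, hBM]
      exact h
    have hsplit2 : sNum (BM M) n - sNum (B'M M) m ≤ sNum B k := by linarith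
    have hkpow : (0 : ℝ) ≤ (k : ℝ) ^ (1 / p) := Real.rpow_nonneg hk0.le _
    have step1 : sNum (BM M) n * (k : ℝ) ^ (1 / p)
        - sNum (B'M M) m * (k : ℝ) ^ (1 / p) ≤ a k := by
      rw [ha_def]
      calc sNum (BM M) n * (k : ℝ) ^ (1 / p) - sNum (B'M M) m * (k : ℝ) ^ (1 / p)
          = (sNum (BM M) n - sNum (B'M M) m) * (k : ℝ) ^ (1 / p) := by ring
        _ ≤ sNum B k * (k : ℝ) ^ (1 / p) := mul_le_mul_of_nonneg_right hsplit2 hkpow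
    -- first term from below
    have hfac1 : ((n : ℝ)) ^ (1 / p) * (((1 + δ) ^ (1 / p))⁻¹) ≤ (k : ℝ) ^ (1 / p) := by
      have hle : (n : ℝ) ≤ (k : ℝ) * (1 + δ) := by
        rw [hnR]
        nlinarith
      have hpow : (n : ℝ) ^ (1 / p) ≤ (k : ℝ) ^ (1 / p) * (1 + δ) ^ (1 / p) := by
        calc (n : ℝ) ^ (1 / p) ≤ ((k : ℝ) * (1 + δ)) ^ (1 / p) :=
              Real.rpow_le_rpow (Nat.cast_nonneg _) hle hp''
          _ = _ := Real.mul_rpow hk0.le h1δ.le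
      have hpos : (0 : ℝ) < (1 + δ) ^ (1 / p) := Real.rpow_pos_of_pos h1δ _
      rw [← div_le_iff₀ hpos] at hpow
      rwa [div_eq_mul_inv] at hpow
    have term1 : (CM M - ε) * (((1 + δ) ^ (1 / p))⁻¹) ≤ sNum (BM M) n * (k : ℝ) ^ (1 / p) := by
      have hinv : (0 : ℝ) ≤ ((1 + δ) ^ (1 / p))⁻¹ :=
        inv_nonneg.mpr (Real.rpow_nonneg h1δ.le _)
      calc (CM M - ε) * (((1 + δ) ^ (1 / p))⁻¹)
          ≤ (sNum (BM M) n * (n : ℝ) ^ (1 / p)) * (((1 + δ) ^ (1 / p))⁻¹) :=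
            mul_le_mul_of_nonneg_right hbk hinv
        _ = sNum (BM M) n * ((n : ℝ) ^ (1 / p) * (((1 + δ) ^ (1 / p))⁻¹)) := by ring
        _ ≤ sNum (BM M) n * (k : ℝ) ^ (1 / p) :=
            mul_le_mul_of_nonneg_left hfac1 (sNum_nonneg _ _)
    -- second term from above
    have hfac2 : (k : ℝ) ^ (1 / p) ≤ (m : ℝ) ^ (1 / p) * (2 / δ) ^ (1 / p) := by
      have hle : (k : ℝ) ≤ (m : ℝ) * (2 / δ) := by
        calc (k : ℝ) = (δ * k / 2) * (2 / δ) := by field_simp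
          _ ≤ (m : ℝ) * (2 / δ) := mul_le_mul_of_nonneg_right hm_ge (by positivity)
      calc (k : ℝ) ^ (1 / p) ≤ ((m : ℝ) * (2 / δ)) ^ (1 / p) :=
            Real.rpow_le_rpow hk0.le hle hp''
        _ = _ := Real.mul_rpow (Nat.cast_nonneg _) (by positivity)
    have term2 : sNum (B'M M) m * (k : ℝ) ^ (1 / p) ≤ cM M * (2 / δ) ^ (1 / p) := by
      calc sNum (B'M M) m * (k : ℝ) ^ (1 / p)
          ≤ sNum (B'M M) m * ((m : ℝ) ^ (1 / p) * (2 / δ) ^ (1 / p)) :=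
            mul_le_mul_of_nonneg_left hfac2 (sNum_nonneg _ _)
        _ = (sNum (B'M M) m * (m : ℝ) ^ (1 / p)) * (2 / δ) ^ (1 / p) := by ring
        _ ≤ cM M * (2 / δ) ^ (1 / p) :=
            mul_le_mul_of_nonneg_right (hbound M m hm1) (by positivity)
    linarith
  -- boundedness
  have hbdd_below : IsBoundedUnder (· ≥ ·) atTop a := ⟨0, eventually_map.mpr (Eventually.of_forall ha0)⟩
  have hbdd_above : IsBoundedUnder (· ≤ ·) atTop a := by
    refine ⟨(CM 0 + 1) * ((1 - 1 / 2 : ℝ)⁻¹) ^ (1 / p) + cM 0 * (2 / (1 / 2)) ^ (1 / p), ?_⟩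
    exact eventually_map.mpr (upper 0 (1 / 2) (by norm_num) le_rfl 1 one_pos)
  have hcob_le : IsCoboundedUnder (· ≤ ·) atTop a := hbdd_below.isCoboundedUnder_le
  have hcob_ge : IsCoboundedUnder (· ≥ ·) atTop a := hbdd_above.isCoboundedUnder_ge
  -- limsup bound for each M, δ
  have hLMδ : ∀ M : ℕ, ∀ δ : ℝ, 0 < δ → δ ≤ 1 / 2 →
      limsup a atTop ≤ CM M * ((1 - δ)⁻¹) ^ (1 / p) + cM M * (2 / δ) ^ (1 / p) := by
    intro M δ hδ hδ2
    have h1δ : (0 : ℝ) < 1 - δ := by linarith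
    have hK1 : (0 : ℝ) < ((1 - δ)⁻¹) ^ (1 / p) :=
      Real.rpow_pos_of_pos (inv_pos.mpr h1δ) _
    refine le_of_forall_pos_le_add fun ε' hε' => ?_
    have h := limsup_le_of_le hcob_le (upper M δ hδ hδ2 (ε' / ((1 - δ)⁻¹) ^ (1 / p))
      (by positivity))
    calc limsup a atTop
        ≤ (CM M + ε' / ((1 - δ)⁻¹) ^ (1 / p)) * ((1 - δ)⁻¹) ^ (1 / p)
          + cM M * (2 / δ) ^ (1 / p) := h
      _ = CM M * ((1 - δ)⁻¹) ^ (1 / p) + cM M * (2 / δ) ^ (1 / p) + ε' := by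
          field_simp
          ring
  -- liminf bound for each M, δ
  have hlMδ : ∀ M : ℕ, ∀ δ : ℝ, 0 < δ → δ ≤ 1 / 2 →
      CM M * (((1 + δ) ^ (1 / p))⁻¹) - cM M * (2 / δ) ^ (1 / p) ≤ liminf a atTop := by
    intro M δ hδ hδ2
    have h1δ : (0 : ℝ) < 1 + δ := by linarith
    have hK1 : (0 : ℝ) < ((1 + δ) ^ (1 / p))⁻¹ :=
      inv_pos.mpr (Real.rpow_pos_of_pos h1δ _)
    refine le_of_forall_pos_le_add fun ε' hε' => ?_
    have h := le_liminf_of_le hcob_ge (lower M δ hδ hδ2 (ε' / ((1 + δ) ^ (1 / p))⁻¹)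
      (by positivity))
    calc CM M * (((1 + δ) ^ (1 / p))⁻¹) - cM M * (2 / δ) ^ (1 / p)
        = (CM M - ε' / ((1 + δ) ^ (1 / p))⁻¹) * (((1 + δ) ^ (1 / p))⁻¹)
          - cM M * (2 / δ) ^ (1 / p) + ε' := by
          field_simp
          ring
      _ ≤ liminf a atTop + ε' := by linarith
  -- M → ∞
  have hLδ : ∀ δ : ℝ, 0 < δ → δ ≤ 1 / 2 →
      limsup a atTop ≤ C₀ * ((1 - δ)⁻¹) ^ (1 / p) := by
    intro δ hδ hδ2
    have htend : Tendsto (fun M => CM M * ((1 - δ)⁻¹) ^ (1 / p) + cM M * (2 / δ) ^ (1 / p))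
        atTop (𝓝 (C₀ * ((1 - δ)⁻¹) ^ (1 / p))) := by
      have := (hCM.mul_const (((1 - δ)⁻¹) ^ (1 / p))).add (hcM.mul_const ((2 / δ) ^ (1 / p)))
      simpa using this
    exact ge_of_tendsto htend (Eventually.of_forall fun M => hLMδ M δ hδ hδ2)
  have hlδ : ∀ δ : ℝ, 0 < δ → δ ≤ 1 / 2 →
      C₀ * (((1 + δ) ^ (1 / p))⁻¹) ≤ liminf a atTop := by
    intro δ hδ hδ2
    have htend : Tendsto (fun M => CM M * (((1 + δ) ^ (1 / p))⁻¹) - cM M * (2 / δ) ^ (1 / p))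
        atTop (𝓝 (C₀ * (((1 + δ) ^ (1 / p))⁻¹))) := by
      have := (hCM.mul_const (((1 + δ) ^ (1 / p))⁻¹)).sub (hcM.mul_const ((2 / δ) ^ (1 / p)))
      simpa using this
    exact le_of_tendsto htend (Eventually.of_forall fun M => hlMδ M δ hδ hδ2)
  -- δ → 0
  have hL : limsup a atTop ≤ C₀ := by
    have htend : Tendsto (fun δ : ℝ => C₀ * ((1 - δ)⁻¹) ^ (1 / p)) (𝓝[>] (0 : ℝ)) (𝓝 C₀) := by
      have hc : ContinuousAt (fun δ : ℝ => C₀ * ((1 - δ)⁻¹) ^ (1 / p)) 0 := by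
        have h1 : ContinuousAt (fun δ : ℝ => (1 - δ)⁻¹) 0 :=
          ((continuous_const.sub continuous_id).continuousAt).inv₀ (by norm_num)
        exact continuousAt_const.mul (h1.rpow_const (Or.inr hp''))
      have h2 := hc.tendsto.mono_left (nhdsWithin_le_nhds (s := Set.Ioi (0 : ℝ)))
      simpa using h2
    refine ge_of_tendsto htend ?_
    filter_upwards [Ioc_mem_nhdsGT (by norm_num : (0 : ℝ) < 1 / 2)] with δ hδ
    exact hLδ δ hδ.1 hδ.2
  have hl : C₀ ≤ liminf a atTop := by
    have htend : Tendsto (fun δ : ℝ => C₀ * (((1 + δ) ^ (1 / p))⁻¹)) (𝓝[>] (0 : ℝ)) (𝓝 C₀) := by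
      have hc : ContinuousAt (fun δ : ℝ => C₀ * (((1 + δ) ^ (1 / p))⁻¹)) 0 := by
        have h1 : ContinuousAt (fun δ : ℝ => (1 + δ) ^ (1 / p)) 0 :=
          ((continuous_const.add continuous_id).continuousAt).rpow_const (Or.inr hp'')
        have h1ne : ((1 : ℝ) + 0) ^ (1 / p) ≠ 0 := by
          have : (0 : ℝ) < ((1 : ℝ) + 0) ^ (1 / p) := Real.rpow_pos_of_pos (by norm_num) _
          exact this.ne'
        exact continuousAt_const.mul (h1.inv₀ h1ne)
      have h2 := hc.tendsto.mono_left (nhdsWithin_le_nhds (s := Set.Ioi (0 : ℝ)))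
      simpa using h2
    refine le_of_tendsto htend ?_
    filter_upwards [Ioc_mem_nhdsGT (by norm_num : (0 : ℝ) < 1 / 2)] with δ hδ
    exact hlδ δ hδ.1 hδ.2
  exact tendsto_of_le_liminf_of_limsup_le hl hL hbdd_above hbdd_below
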